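/- Let R be a random RR set of a finite directed graph G with n nodes and m edges, and let w(R) = Σ_{v∈R} indeg(v) be its width. Let v* be a random node sampled with probability proportional to its in-degree. Then (n/m)·E[w(R)] = E[I({v*})], the expected spread of the single random seed v*. -/

import Mathlib

open MeasureTheory ProbabilityTheory
open scoped Classical

/-- Lemma 5 of Tang–Xiao–Shi: `(n/m)·E[w(R)] = E[I({v*})]`, where `R` is a random RR set
(generated for a uniformly random node on an edge-percolated subgraph of `G`),
`w(R) = Σ_{u ∈ R} indeg(u)` is its width, and `v*` is a random node sampled with probability
proportional to its in-degree; `I({v*})` is the number of nodes reachable from `v*` in the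
percolated subgraph (the spread of the single seed `v*` under the IC model). -/
theorem width_expectation_eq_degree_weighted_spread
    {V : Type*} [Fintype V] [Nonempty V] [MeasurableSpace V] [MeasurableSingletonClass V]
    (E : V → V → Prop) [DecidableRel E]
    (μ : Measure (V → V → Bool)) [IsProbabilityMeasure μ]
    (indeg : V → ℕ) (hindeg : ∀ v, indeg v = (Finset.univ.filter (fun u => E u v)).card)
    (m : ℕ) (hm : m = ∑ v : V, indeg v) (hm0 : 0 < m) :
    ((Fintype.card V : ℝ) / m) *
      ∫ x, (∑ u ∈ Finset.univ.filter
              (fun u : V => Relation.ReflTransGen (fun a b => E a b ∧ x.1 a b = true) u x.2),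
            (indeg u : ℝ))
        ∂(μ.prod (PMF.uniformOfFintype V).toMeasure)
    = ∑ v : V, ((indeg v : ℝ) / m) *
        ∫ ω, ((Finset.univ.filter (fun w : V =>
            Relation.ReflTransGen (fun a b => E a b ∧ ω a b = true) v w)).card : ℝ) ∂μ := by
  have huni : ∀ f : V → ℝ,
      ∫ t, f t ∂(PMF.uniformOfFintype V).toMeasure = ∑ t : V, (Fintype.card V : ℝ)⁻¹ * f t := by
    intro f
    rw [integral_fintype Integrable.of_finite]
    congr 1; ext t
    rw [measureReal_def, PMF.toMeasure_apply_singleton _ _ (measurableSet_singleton _), PMF.uniformOfFintype_apply]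
    simp [smul_eq_mul]
  rw [integral_prod _ Integrable.of_finite]
  have key : ∀ ω : V → V → Bool,
      (∫ t, (∑ u ∈ Finset.univ.filter
          (fun u : V => Relation.ReflTransGen (fun a b => E a b ∧ ω a b = true) u t),
          (indeg u : ℝ)) ∂(PMF.uniformOfFintype V).toMeasure)
      = (Fintype.card V : ℝ)⁻¹ * ∑ u : V, (indeg u : ℝ) *
          ((Finset.univ.filter (fun w : V =>
            Relation.ReflTransGen (fun a b => E a b ∧ ω a b = true) u w)).card : ℝ) := by
    intro ω
    rw [huni, ← Finset.mul_sum]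
    congr 1
    rw [Finset.sum_comm' (s := Finset.univ) (t := fun t => Finset.univ.filter
        (fun u : V => Relation.ReflTransGen (fun a b => E a b ∧ ω a b = true) u t))
        (t' := Finset.univ) (s' := fun u => Finset.univ.filter
        (fun w : V => Relation.ReflTransGen (fun a b => E a b ∧ ω a b = true) u w))]
    · simp [Finset.sum_const, mul_comm]
    · intro x y; simp
  simp only [key]
  rw [integral_const_mul, integral_finset_sum _ (fun _ _ => Integrable.of_finite)]
  simp only [integral_const_mul]
  rw [Finset.mul_sum, Finset.mul_sum]
  apply Finset.sum_congr rfl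
  intro v _
  have hc : (Fintype.card V : ℝ) ≠ 0 := by positivity
  rw [div_mul_eq_mul_div, div_mul_eq_mul_div, ← mul_assoc, ← mul_assoc, mul_inv_cancel₀ hc, one_mul]
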